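/- arXiv:2603.28442 — 3 statements merged into one kernel-verified Lean document; each statement's English description precedes it below -/
import Mathlib

section
/- Suppose A : D(A) ⊂ H → H generates a strongly continuous group S(t) on a Hilbert space H, and let b₁,…,bₘ ∈ D(A) be such that V := span{b₁,…,bₘ} is an A-invariant subspace. Then for the mild solution y(t) = S(t)y₀ + ∫₀ᵗ S(t-s)Σₖ bₖ uₖ(s) ds of the controlled system, with T(t) := S(-t), one has T(t)y(t) ∈ span{y₀, b₁, …, bₘ} for every t ≥ 0. In particular, for any time points t₁,…,t_{n_t}, dim span{T(t₁)y(t₁),…,T(t_{n_t})y(t_{n_t})} ≤ min(m+1, n_t). -/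
open MeasureTheory

section AuxInvariance

attribute [local instance] Matrix.linftyOpNormedRing Matrix.linftyOpNormedAlgebra

open NormedSpace in
theorem aux_group_invariant
    {H : Type*} [NormedAddCommGroup H] [NormedSpace ℝ H]
    (S : ℝ → H →L[ℝ] H)
    (hS0 : S 0 = ContinuousLinearMap.id ℝ H)
    (hSadd : ∀ s t : ℝ, S (s + t) = (S s).comp (S t))
    {m : ℕ} (b : Fin m → H) (A : H → H)
    (hgen : ∀ i, HasDerivAt (fun t => S t (b i)) (A (b i)) 0)
    (hAinv : ∀ i, A (b i) ∈ Submodule.span ℝ (Set.range b))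
    (t : ℝ) (i : Fin m) : S t (b i) ∈ Submodule.span ℝ (Set.range b) := by
  classical
  haveI : CompleteSpace (Matrix (Fin m) (Fin m) ℝ) := FiniteDimensional.complete ℝ _
  choose c hc using fun i => (Submodule.mem_span_range_iff_exists_fun ℝ).mp (hAinv i)
  set C : Matrix (Fin m) (Fin m) ℝ := Matrix.of c with hCdef
  -- derivative of `r ↦ S r (b j)` at an arbitrary point
  have hSb : ∀ (r : ℝ) (j : Fin m), HasDerivAt (fun x => S x (b j)) (S r (A (b j))) r := by
    intro r j
    have h0 : HasDerivAt (fun x : ℝ => x - r) 1 r := (hasDerivAt_id r).sub_const r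
    have h1 : HasDerivAt (fun x : ℝ => S (x - r) (b j)) (A (b j)) r := by
      have hg0 : HasDerivAt (fun z => S z (b j)) (A (b j)) ((fun x : ℝ => x - r) r) := by
        simpa using hgen j
      simpa [Function.comp_def] using HasDerivAt.scomp (h := fun x : ℝ => x - r) (x := r) hg0 h0
    have h2 := (S r).hasFDerivAt.comp_hasDerivAt r h1
    refine HasDerivAt.congr_of_eventuallyEq h2 (Filter.Eventually.of_forall fun x => ?_)
    have h3 : r + (x - r) = x := by ring
    have h4 := hSadd r (x - r)
    rw [h3] at h4
    show S x (b j) = S r (S (x - r) (b j))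
    rw [h4]; rfl
  set E : ℝ → Matrix (Fin m) (Fin m) ℝ := fun s => exp (s • C) with hEdef
  have hEmul : ∀ s : ℝ, E s * E (-s) = 1 := by
    intro s
    have hcomm : Commute (s • C) ((-s) • C) :=
      ((Commute.refl C).smul_right (-s)).smul_left s
    calc E s * E (-s) = exp (s • C + (-s) • C) := (exp_add_of_commute hcomm).symm
      _ = exp (0 : Matrix (Fin m) (Fin m) ℝ) := by rw [← add_smul]; simp
      _ = 1 := exp_zero
  have hEentry : ∀ (s : ℝ) (i j : Fin m),
      HasDerivAt (fun x : ℝ => E (-x) i j) (-((E (-s) * C) i j)) s := by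
    intro s i j
    have h2 : HasDerivAt (fun x : ℝ => E (-x)) (-(E (-s) * C)) s := by
      have hg0 : HasDerivAt (fun u : ℝ => exp (u • C)) (exp ((-s) • C) * C)
          ((fun x : ℝ => -x) s) := hasDerivAt_exp_smul_const C (-s)
      have h2' := HasDerivAt.scomp (h := fun x : ℝ => -x) (x := s) hg0 (hasDerivAt_neg s)
      simp [hEdef, Function.comp_def] at h2' ⊢; exact h2'
    have h3 := ((Matrix.entryLinearMap ℝ ℝ i j).toContinuousLinearMap).hasFDerivAt.comp_hasDerivAt
      s h2
    simp [Function.comp_def] at h3 ⊢; exact h3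
  have hA : ∀ (s : ℝ) (j : Fin m), S s (A (b j)) = ∑ k, c j k • S s (b k) := by
    intro s j
    rw [← hc j, map_sum]
    simp
  have hg : ∀ (i : Fin m) (s : ℝ),
      HasDerivAt (fun x => ∑ j, E (-x) i j • S x (b j)) 0 s := by
    intro i s
    have hterm : ∀ j ∈ Finset.univ, HasDerivAt (fun x => E (-x) i j • S x (b j))
        (E (-s) i j • S s (A (b j)) + (-((E (-s) * C) i j)) • S s (b j)) s :=
      fun j _ => (hEentry s i j).smul (hSb s j)
    have hsum := HasDerivAt.fun_sum hterm
    convert hsum using 1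
    symm
    have hfirst : ∑ j, E (-s) i j • S s (A (b j))
        = ∑ k, ((E (-s) * C) i k) • S s (b k) := by
      simp_rw [hA, Finset.smul_sum, smul_smul]
      rw [Finset.sum_comm]
      refine Finset.sum_congr rfl fun k _ => ?_
      rw [Matrix.mul_apply, Finset.sum_smul]
      rfl
    calc ∑ j, (E (-s) i j • S s (A (b j)) + (-((E (-s) * C) i j)) • S s (b j))
        = ∑ j, E (-s) i j • S s (A (b j))
            + ∑ j, (-((E (-s) * C) i j)) • S s (b j) := Finset.sum_add_distrib
      _ = ∑ j, ((E (-s) * C) i j) • S s (b j)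
            + ∑ j, (-((E (-s) * C) i j)) • S s (b j) := by rw [hfirst]
      _ = ∑ j, (((E (-s) * C) i j) • S s (b j) + (-((E (-s) * C) i j)) • S s (b j)) :=
          Finset.sum_add_distrib.symm
      _ = 0 := by
          refine Finset.sum_eq_zero fun j _ => ?_
          rw [neg_smul, add_neg_cancel]
  have hconst : ∀ i : Fin m, (∑ j, E (-t) i j • S t (b j)) = b i := by
    intro i
    have h0 : (fun x => ∑ j, E (-x) i j • S x (b j)) t
        = (fun x => ∑ j, E (-x) i j • S x (b j)) 0 :=
      is_const_of_deriv_eq_zero (fun s => (hg i s).differentiableAt)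
        (fun s => (hg i s).deriv) t 0
    simp only at h0
    rw [h0]
    have hE0 : E (-(0:ℝ)) = 1 := by simp [hEdef, exp_zero]
    rw [hE0, hS0]
    simp [Matrix.one_apply]
  have key : S t (b i) = ∑ k, E t i k • b k := by
    calc S t (b i) = ∑ j, (1 : Matrix (Fin m) (Fin m) ℝ) i j • S t (b j) := by
          simp [Matrix.one_apply]
      _ = ∑ j, (E t * E (-t)) i j • S t (b j) := by rw [hEmul t]
      _ = ∑ k, E t i k • ∑ j, E (-t) k j • S t (b j) := by
          simp_rw [Matrix.mul_apply, Finset.sum_smul, Finset.smul_sum, smul_smul]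
          exact Finset.sum_comm
      _ = ∑ k, E t i k • b k := by simp_rw [hconst]
  rw [key]
  exact Submodule.sum_mem _ fun k _ =>
    Submodule.smul_mem _ _ (Submodule.subset_span ⟨k, rfl⟩)

end AuxInvariance

/-- Let `A` generate a strongly continuous group `S(t)` on a Hilbert space `H`, and let
`b₁,…,bₘ ∈ D(A)` span an `A`-invariant subspace. Then for the mild solution
`y(t) = S(t)y₀ + ∫₀ᵗ S(t-s) Σₖ bₖ uₖ(s) ds` of the controlled system, with `T(t) := S(-t)`,
one has `T(t)y(t) ∈ span{y₀, b₁, …, bₘ}` for every `t ≥ 0`; in particular, for any time points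
`t₁,…,t_{n_t}`, `dim span{T(t₁)y(t₁),…,T(t_{n_t})y(t_{n_t})} ≤ min(m+1, n_t)`. -/
theorem shifted_snapshots_low_rank
    {H : Type*} [NormedAddCommGroup H] [InnerProductSpace ℝ H] [CompleteSpace H]
    (S : ℝ → H →L[ℝ] H)
    (hS0 : S 0 = ContinuousLinearMap.id ℝ H)
    (hSadd : ∀ s t : ℝ, S (s + t) = (S s).comp (S t))
    (hScont : ∀ x : H, Continuous fun t => S t x)
    (m : ℕ) (b : Fin m → H) (A : H → H)
    -- each `bᵢ` lies in the domain of the generator `A` of the group `S`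
    (hgen : ∀ i, HasDerivAt (fun t => S t (b i)) (A (b i)) 0)
    -- `span{b₁,…,bₘ}` is `A`-invariant
    (hAinv : ∀ i, A (b i) ∈ Submodule.span ℝ (Set.range b))
    (T : ℝ) (hT : 0 < T) (y₀ : H) (u : ℝ → Fin m → ℝ)
    -- `u ∈ L²(0,T;ℝᵐ)`
    (humeas : ∀ i, Measurable fun s => u s i)
    (hu : IntervalIntegrable (fun s => ∑ k, (u s k) ^ 2) volume 0 T)
    (y : ℝ → H)
    -- `y` is the mild solution of `ẏ = Ay + Bu`, `y(0) = y₀`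
    (hy : ∀ t, y t = S t y₀ + ∫ s in (0:ℝ)..t, S (t - s) (∑ k, u s k • b k)) :
    (∀ t : ℝ, 0 ≤ t →
        S (-t) (y t) ∈ Submodule.span ℝ ({y₀} ∪ Set.range b)) ∧
    (∀ (nt : ℕ) (tp : Fin nt → ℝ), (∀ j, tp j ∈ Set.Icc (0:ℝ) T) →
        Module.finrank ℝ
          (Submodule.span ℝ (Set.range fun j => S (-(tp j)) (y (tp j))))
          ≤ min (m + 1) nt) := by
  classical
  set V : Submodule ℝ H := Submodule.span ℝ (Set.range b) with hVdef
  haveI : FiniteDimensional ℝ V := FiniteDimensional.span_of_finite ℝ (Set.finite_range b)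
  -- the group maps V into V
  have hSV : ∀ (s : ℝ), ∀ x ∈ V, S s x ∈ V := by
    intro s x hx
    induction hx using Submodule.span_induction with
    | mem z hz =>
        obtain ⟨k, rfl⟩ := hz
        exact aux_group_invariant S hS0 hSadd b A hgen hAinv s k
    | zero => simp
    | add _ _ _ _ h1 h2 => rw [map_add]; exact Submodule.add_mem _ h1 h2
    | smul a _ _ h1 => rw [_root_.map_smul]; exact Submodule.smul_mem _ _ h1
  -- inverses cancel
  have hScancel : ∀ (s : ℝ) (x : H), S (-s) (S s x) = x := by
    intro s x
    have h := hSadd (-s) s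
    rw [neg_add_cancel, hS0] at h
    have := congrArg (fun L : H →L[ℝ] H => L x) h
    simpa using this.symm
  -- the orthogonal projection onto V
  set P : H →L[ℝ] H := V.subtypeL.comp (Submodule.orthogonalProjection V) with hPdef
  have hPmem : ∀ x : H, P x ∈ V := fun x => (Submodule.orthogonalProjection V x).2
  have hPfix : ∀ x ∈ V, P x = x := fun x hx =>
    Submodule.starProjection_eq_self_iff.mpr hx
  -- main membership claim
  have main : ∀ t : ℝ, S (-t) (y t) ∈ Submodule.span ℝ ({y₀} ∪ Set.range b) := by
    intro t
    have hy₀mem : y₀ ∈ Submodule.span ℝ ({y₀} ∪ Set.range b) :=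
      Submodule.subset_span (Or.inl rfl)
    have hVle : V ≤ Submodule.span ℝ ({y₀} ∪ Set.range b) :=
      Submodule.span_mono Set.subset_union_right
    set G : ℝ → H := fun s => S (-s) (∑ k, u s k • b k) with hGdef
    have hGmem : ∀ s, G s ∈ V :=
      fun s => hSV _ _ (Submodule.sum_mem _ fun k _ =>
        Submodule.smul_mem _ _ (Submodule.subset_span ⟨k, rfl⟩))
    have hFG : ∀ s : ℝ, S (t - s) (∑ k, u s k • b k) = S t (G s) := by
      intro s
      have h : t + (-s) = t - s := by ring
      have h4 := hSadd t (-s)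
      rw [h] at h4
      rw [h4]; rfl
    by_cases hint : IntervalIntegrable G volume 0 t
    · have hIeq : (∫ s in (0:ℝ)..t, S (t - s) (∑ k, u s k • b k))
          = S t (∫ s in (0:ℝ)..t, G s) := by
        rw [intervalIntegral.integral_congr (g := fun s => S t (G s))
          (fun s _ => hFG s)]
        exact (S t).intervalIntegral_comp_comm hint
      have hImem : (∫ s in (0:ℝ)..t, G s) ∈ V := by
        have h1 : (∫ s in (0:ℝ)..t, G s) = ∫ s in (0:ℝ)..t, P (G s) := by
          refine (intervalIntegral.integral_congr fun s _ => ?_).symm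
          exact hPfix _ (hGmem s)
        rw [h1, P.intervalIntegral_comp_comm hint]
        exact hPmem _
      have : S (-t) (y t) = y₀ + ∫ s in (0:ℝ)..t, G s := by
        rw [hy t, hIeq, map_add, hScancel, hScancel]
      rw [this]
      exact Submodule.add_mem _ hy₀mem (hVle hImem)
    · have hFnot : ¬ IntervalIntegrable
          (fun s => S (t - s) (∑ k, u s k • b k)) volume 0 t := by
        intro hF
        apply hint
        have h2 : IntervalIntegrable (fun s => S (-t) (S (t - s) (∑ k, u s k • b k)))
            volume 0 t :=
          ⟨(S (-t)).integrable_comp hF.1, (S (-t)).integrable_comp hF.2⟩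
        refine h2.congr_ae (Filter.EventuallyEq.of_eq ?_)
        funext s
        rw [hFG s, hScancel]
      have : S (-t) (y t) = y₀ := by
        rw [hy t, intervalIntegral.integral_undef hFnot, add_zero, hScancel]
      rw [this]
      exact Submodule.subset_span (Or.inl rfl)
  refine ⟨fun t _ => main t, ?_⟩
  intro nt tp htp
  have hfin : ({y₀} ∪ Set.range b : Set H).Finite :=
    (Set.finite_singleton _).union (Set.finite_range b)
  haveI : FiniteDimensional ℝ (Submodule.span ℝ ({y₀} ∪ Set.range b)) :=
    FiniteDimensional.span_of_finite ℝ hfin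
  have hle : Submodule.span ℝ (Set.range fun j => S (-(tp j)) (y (tp j)))
      ≤ Submodule.span ℝ ({y₀} ∪ Set.range b) := by
    rw [Submodule.span_le]
    rintro x ⟨j, rfl⟩
    exact main (tp j)
  refine le_min ?_ ?_
  · refine le_trans (Submodule.finrank_mono hle) ?_
    have hrange : ({y₀} ∪ Set.range b : Set H) = Set.range (Fin.cons y₀ b) := by
      rw [Fin.range_cons, Set.singleton_union]
    rw [hrange]
    simpa [Set.finrank] using finrank_range_le_card (R := ℝ) (Fin.cons y₀ b)
  · simpa [Set.finrank] using finrank_range_le_card (R := ℝ) (fun j => S (-(tp j)) (y (tp j)))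
end

section
/- Let V be a finite-dimensional subspace of the domain of the generator A of a strongly continuous semigroup S(t) on a Banach space X, such that A(V) ⊆ V. Then V is invariant under the semigroup: S(t)V ⊆ V for all t ≥ 0. -/
open Set NormedSpace

set_option maxHeartbeats 1000000
set_option synthInstance.maxHeartbeats 400000

/-- Let `V` be a finite-dimensional subspace of the domain of the generator `A` of a strongly
continuous semigroup `S(t)` on a Banach space `X`, with `A(V) ⊆ V`. Then `V` is invariant
under the semigroup: `S(t)V ⊆ V` for all `t ≥ 0`. -/
theorem finiteDimensional_generator_invariant_semigroup_invariant
    {X : Type*} [NormedAddCommGroup X] [NormedSpace ℝ X] [CompleteSpace X]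
    (S : ℝ → X →L[ℝ] X)
    (hS0 : S 0 = ContinuousLinearMap.id ℝ X)
    (hSadd : ∀ s t : ℝ, 0 ≤ s → 0 ≤ t → S (s + t) = (S s).comp (S t))
    (hScont : ∀ x : X, ContinuousOn (fun t => S t x) (Set.Ici (0:ℝ)))
    (V : Submodule ℝ X) [FiniteDimensional ℝ V] (A : X → X)
    -- `V` is contained in the domain of the generator `A`
    (hgen : ∀ v ∈ V, HasDerivWithinAt (fun t => S t v) (A v) (Set.Ici (0:ℝ)) 0)
    -- `A(V) ⊆ V`
    (hAinv : ∀ v ∈ V, A v ∈ V) :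
    ∀ t : ℝ, 0 ≤ t → ∀ v ∈ V, S t v ∈ V := by
  classical
  set n := Module.finrank ℝ V with hn
  let b : Module.Basis (Fin n) ℝ V := Module.finBasis ℝ V
  -- A restricted to V as a continuous linear endomorphism of V
  let B₀ : V →ₗ[ℝ] V :=
    { toFun := fun v => ⟨A v, hAinv v v.2⟩
      map_add' := by
        intro x y
        have hx := (hgen x x.2)
        have hy := (hgen y y.2)
        have hxy := (hgen (↑x + ↑y) (V.add_mem x.2 y.2))
        have : HasDerivWithinAt (fun t => S t (↑x + ↑y)) (A ↑x + A ↑y) (Set.Ici (0:ℝ)) 0 := by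
          have := hx.add hy
          simpa [map_add, Pi.add_def] using this
        have h1 := hxy.derivWithin (uniqueDiffOn_Ici 0 0 Set.self_mem_Ici)
        have h2 := this.derivWithin (uniqueDiffOn_Ici 0 0 Set.self_mem_Ici)
        ext
        push_cast
        rw [← h1, h2]
      map_smul' := by
        intro c x
        have hx := (hgen x x.2)
        have hcx := (hgen (c • (x:X)) (V.smul_mem c x.2))
        have : HasDerivWithinAt (fun t => S t (c • (x:X))) (c • A ↑x) (Set.Ici (0:ℝ)) 0 := by
          have := hx.const_smul c
          simpa [map_smul, Pi.smul_def] using this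
        have h1 := hcx.derivWithin (uniqueDiffOn_Ici 0 0 Set.self_mem_Ici)
        have h2 := this.derivWithin (uniqueDiffOn_Ici 0 0 Set.self_mem_Ici)
        ext
        push_cast
        rw [← h1, h2]; rfl }
  let B : V →L[ℝ] V := LinearMap.toContinuousLinearMap B₀
  letI : NormedRing (V →L[ℝ] V) := ContinuousLinearMap.toNormedRing
  letI : NormedAlgebra ℝ (V →L[ℝ] V) := ContinuousLinearMap.toNormedAlgebra
  letI : IsTopologicalRing (V →L[ℝ] V) := inferInstance
  have hB : ∀ v : V, (↑(B v) : X) = A ↑v := fun v => rfl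
  -- structure constants
  let C : Fin n → Fin n → ℝ := fun i j => b.repr (B (b i)) j
  have hC : ∀ i, B (b i) = ∑ j, C i j • b j := by
    intro i
    exact (b.sum_repr (B (b i))).symm
  -- The ODE vector field on `Fin n → X`
  let M : (Fin n → X) →L[ℝ] (Fin n → X) :=
    ContinuousLinearMap.pi fun i =>
      ∑ j, C i j • (ContinuousLinearMap.proj j : (Fin n → X) →L[ℝ] X)
  have hM : ∀ (x : Fin n → X) (i), M x i = ∑ j, C i j • x j := by
    intro x i
    simp [M, ContinuousLinearMap.sum_apply]
  -- derivative of the semigroup applied to elements of V, at any time t ≥ 0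
  have hderivS : ∀ (v : X), v ∈ V → ∀ t : ℝ, 0 ≤ t →
      HasDerivWithinAt (fun τ => S τ v) (S t (A v)) (Set.Ici t) t := by
    intro v hv t ht
    have hsub : HasDerivWithinAt (fun τ : ℝ => τ - t) 1 (Set.Ici t) t := by
      simpa using ((hasDerivWithinAt_id t (Set.Ici t)).sub_const t)
    have hmaps : Set.MapsTo (fun τ : ℝ => τ - t) (Set.Ici t) (Set.Ici (0:ℝ)) := by
      intro τ hτ; simpa [Set.mem_Ici] using sub_nonneg.2 (Set.mem_Ici.1 hτ)
    have h1 : HasDerivWithinAt (fun τ => S (τ - t) v) ((1:ℝ) • A v) (Set.Ici t) t := by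
      have := (hgen v hv).scomp_of_eq t hsub hmaps (sub_self t).symm
      simpa [Function.comp_def] using this
    have h2 : HasDerivWithinAt (fun τ => S t (S (τ - t) v)) (S t (A v)) (Set.Ici t) t := by
      have := ((S t).hasFDerivAt.comp_hasDerivWithinAt t h1)
      simpa [Function.comp_def] using this
    apply h2.congr
    · intro τ hτ
      have : S τ = (S t).comp (S (τ - t)) := by
        have := hSadd t (τ - t) ht (sub_nonneg.2 hτ)
        simpa [add_sub_cancel] using this
      simp [this]
    · simp [hS0]
  -- solution 1: the semigroup orbit of the basis vectors
  set f : ℝ → Fin n → X := fun t i => S t ((b i : V) : X) with hf_def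
  -- solution 2: built from the exponential of B
  set g : ℝ → Fin n → X := fun t i => ((NormedSpace.exp (t • B)) (b i) : X) with hg_def
  have hgV : ∀ t i, g t i ∈ V := fun t i => ((NormedSpace.exp (t • B)) (b i)).2
  -- g is differentiable with derivative M (g t)
  have hg' : ∀ t : ℝ, HasDerivAt g (M (g t)) t := by
    intro t
    rw [hasDerivAt_pi]
    intro i
    have hexp : HasDerivAt (fun u : ℝ => NormedSpace.exp (u • B)) (NormedSpace.exp (t • B) * B) t :=
      hasDerivAt_exp_smul_const B t
    have happ : HasDerivAt (fun u : ℝ => (V.subtypeL.comp (ContinuousLinearMap.apply ℝ V (b i)))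
        (NormedSpace.exp (u • B)))
        ((V.subtypeL.comp (ContinuousLinearMap.apply ℝ V (b i))) (NormedSpace.exp (t • B) * B)) t :=
      (V.subtypeL.comp (ContinuousLinearMap.apply ℝ V (b i))).hasFDerivAt.comp_hasDerivAt t hexp
    have hval : ((V.subtypeL.comp (ContinuousLinearMap.apply ℝ V (b i))) (NormedSpace.exp (t • B) * B))
        = M (g t) i := by
      have : (NormedSpace.exp (t • B) * B) (b i) = NormedSpace.exp (t • B) (B (b i)) := rfl
      simp only [ContinuousLinearMap.comp_apply, ContinuousLinearMap.apply_apply, this, hC i,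
        map_sum, map_smul, hM]
      simp [g]
    rw [hval] at happ
    exact happ
  -- f has right derivative M (f t) for t ≥ 0
  have hf' : ∀ t : ℝ, 0 ≤ t → HasDerivWithinAt f (M (f t)) (Set.Ici t) t := by
    intro t ht
    rw [hasDerivWithinAt_pi]
    intro i
    have h1 := hderivS ((b i : V) : X) (b i).2 t ht
    have h2 : S t (A ((b i : V) : X)) = M (f t) i := by
      have hA : A ((b i : V) : X) = ∑ j, C i j • ((b j : V) : X) := by
        rw [← hB (b i), hC i]
        push_cast
        simp
      rw [hA, hM]
      simp [f, map_sum, map_smul]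
    rw [h2] at h1
    exact h1
  -- same initial condition
  have h0 : f 0 = g 0 := by
    funext i
    simp [f, g, hS0, zero_smul, exp_zero]
  -- uniqueness of ODE solutions gives f = g on [0, T]
  have key : ∀ T : ℝ, 0 ≤ T → f T = g T := by
    intro T hT
    have hfc : ContinuousOn f (Set.Icc 0 T) := by
      apply continuousOn_pi.2
      intro i
      exact (hScont _).mono (Set.Icc_subset_Ici_self)
    have hgc : ContinuousOn g (Set.Icc 0 T) :=
      (fun t _ => ((hg' t).continuousAt.continuousWithinAt))
    have := ODE_solution_unique (v := fun _ x => M x) (K := ‖M‖₊)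
      (fun _ => M.lipschitz) hfc
      (fun t htm => hf' t htm.1)
      hgc
      (fun t _ => (hg' t).hasDerivWithinAt)
      h0
    exact this ⟨hT, le_rfl⟩
  -- conclude
  intro t ht v hv
  have hvsum : v = ∑ j, (b.repr ⟨v, hv⟩ j) • ((b j : V) : X) := by
    have := b.sum_repr ⟨v, hv⟩
    calc v = ((⟨v, hv⟩ : V) : X) := rfl
      _ = ((∑ j, b.repr ⟨v, hv⟩ j • b j : V) : X) := by rw [this]
      _ = ∑ j, (b.repr ⟨v, hv⟩ j) • ((b j : V) : X) := by push_cast; simp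
  rw [hvsum, map_sum]
  apply Submodule.sum_mem
  intro j _
  rw [map_smul]
  apply Submodule.smul_mem
  have : S t ((b j : V) : X) = g t j := by
    have := key t ht
    exact congrFun this j
  rw [this]
  exact hgV t j
end

section
/- Suppose α solves αᵀα̇ = αᵀB₁(z)u pointwise a.e. on [0,T] (i.e., (1/2)d/dt‖α(t)‖² = α(t)ᵀB₁(z(t))u(t)), where ‖B₁(z(t))u(t)‖ ≤ √ℓ·β·‖u(t)‖ for all t with β := ‖B‖. If ‖u‖²_{L²(0,T;ℝᵐ)} < ‖α(0)‖²/(β²·e·T·ℓ), then for all t ∈ [0,T]: T·ℓ·β²·ζ < ‖α(t)‖² < (e+1)‖α(0)‖², where ζ := ‖α(0)‖²/(β²·e·T·ℓ) - ‖u‖²_{L²(0,T;ℝᵐ)}. -/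
open MeasureTheory Matrix

private lemma aux_sqrt_add_le (x ε : ℝ) (hx : 0 ≤ x) (hε : 0 ≤ ε) :
    Real.sqrt (x + ε) ≤ Real.sqrt x + Real.sqrt ε := by
  have h1 : x + ε ≤ (Real.sqrt x + Real.sqrt ε) ^ 2 := by
    nlinarith [Real.sq_sqrt hx, Real.sq_sqrt hε, Real.sqrt_nonneg x, Real.sqrt_nonneg ε,
      mul_nonneg (Real.sqrt_nonneg x) (Real.sqrt_nonneg ε)]
  calc Real.sqrt (x + ε) ≤ Real.sqrt ((Real.sqrt x + Real.sqrt ε) ^ 2) := Real.sqrt_le_sqrt h1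
    _ = _ := Real.sqrt_sq (by positivity)


set_option maxHeartbeats 1000000 in
/-- Energy bounds for the reduced state: if `(1/2) d/dt ‖α(t)‖² = α(t)ᵀB₁(z(t))u(t)` a.e.,
with the pointwise bound `‖B₁(z)v‖ ≤ √ℓ·β·‖v‖` (`β = ‖B‖`), and the control is small,
`‖u‖²_{L²(0,T)} < ‖α(0)‖²/(β²·e·T·ℓ)`, then for all `t ∈ [0,T]`:
`T·ℓ·β²·ζ < ‖α(t)‖² < (e+1)‖α(0)‖²`, where
`ζ := ‖α(0)‖²/(β²·e·T·ℓ) - ‖u‖²_{L²(0,T)}`. -/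
theorem alpha_two_sided_bounds
    (T : ℝ) (hT : 0 < T) (ℓ m : ℕ) (β : ℝ) (hβ : 0 < β)
    (α : ℝ → Fin ℓ → ℝ) (hα0 : α 0 ≠ 0)
    (z : ℝ → ℝ) (hz : Measurable z)
    (u : ℝ → Fin m → ℝ)
    (hu : IntervalIntegrable (fun s => ∑ k, (u s k) ^ 2) volume 0 T)
    (B₁ : ℝ → Matrix (Fin ℓ) (Fin m) ℝ)
    (hB₁ : ∀ (s : ℝ) (v : Fin m → ℝ),
        Real.sqrt (∑ i, ((B₁ s).mulVec v i) ^ 2)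
          ≤ Real.sqrt ℓ * β * Real.sqrt (∑ j, (v j) ^ 2))
    (g' : ℝ → ℝ)
    (hderiv : ∀ t ∈ Set.Icc (0:ℝ) T, HasDerivAt (fun s => ∑ i, (α s i) ^ 2) (g' t) t)
    -- the scalar energy identity `(1/2) d/dt ‖α(t)‖² = α(t)ᵀ B₁(z(t)) u(t)` a.e.
    (henergy : ∀ᵐ t ∂volume, t ∈ Set.Icc (0:ℝ) T →
        (1 / 2) * g' t = α t ⬝ᵥ (B₁ (z t)).mulVec (u t))
    (hsmall : (∫ s in (0:ℝ)..T, ∑ k, (u s k) ^ 2)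
        < (∑ i, (α 0 i) ^ 2) / (β ^ 2 * Real.exp 1 * T * ℓ)) :
    ∀ t ∈ Set.Icc (0:ℝ) T,
      T * ℓ * β ^ 2 *
          ((∑ i, (α 0 i) ^ 2) / (β ^ 2 * Real.exp 1 * T * ℓ)
            - ∫ s in (0:ℝ)..T, ∑ k, (u s k) ^ 2)
        < (∑ i, (α t i) ^ 2) ∧
      (∑ i, (α t i) ^ 2) < (Real.exp 1 + 1) * ∑ i, (α 0 i) ^ 2 := by
  set E : ℝ → ℝ := fun s => ∑ i, (α s i) ^ 2 with hEdef
  have hEnn : ∀ s, 0 ≤ E s := fun s => Finset.sum_nonneg fun i _ => sq_nonneg _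
  have hℓ : 0 < ℓ := by
    rcases Nat.eq_zero_or_pos ℓ with h | h
    · exfalso; apply hα0; funext i; subst h; exact i.elim0
    · exact h
  have hℓR : (0:ℝ) < (ℓ:ℝ) := by exact_mod_cast hℓ
  have hE0 : 0 < E 0 := by
    rcases (hEnn 0).lt_or_eq with h | h
    · exact h
    · exfalso; apply hα0; funext i
      have := (Finset.sum_eq_zero_iff_of_nonneg (fun i _ => sq_nonneg (α 0 i))).1 h.symm i
        (Finset.mem_univ i)
      exact pow_eq_zero_iff (n := 2) (by norm_num) |>.1 this
  set U : ℝ := ∫ s in (0:ℝ)..T, ∑ k, (u s k) ^ 2 with hUdef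
  have hU0 : 0 ≤ U :=
    intervalIntegral.integral_nonneg hT.le fun s _ => Finset.sum_nonneg fun i _ => sq_nonneg _
  -- integrability of ‖u‖
  have h_nu : IntervalIntegrable (fun s => Real.sqrt (∑ k, (u s k) ^ 2)) volume 0 T := by
    apply IntervalIntegrable.mono_fun' (g := fun s => 1 + ∑ k, (u s k)^2)
    · exact (intervalIntegrable_const (c := (1:ℝ))).add hu
    · rw [Set.uIoc_of_le hT.le]
      exact Real.continuous_sqrt.comp_aestronglyMeasurable hu.1.aestronglyMeasurable
    · apply Filter.Eventually.of_forall
      intro x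
      show ‖Real.sqrt (∑ k, (u x k) ^ 2)‖ ≤ 1 + ∑ k, (u x k) ^ 2
      have h0 : (0:ℝ) ≤ ∑ k, (u x k)^2 := Finset.sum_nonneg fun i _ => sq_nonneg _
      rw [Real.norm_eq_abs, abs_of_nonneg (Real.sqrt_nonneg _)]
      nlinarith [Real.sq_sqrt h0, Real.sqrt_nonneg (∑ k, (u x k)^2)]
  set I : ℝ := ∫ s in (0:ℝ)..T, Real.sqrt (∑ k, (u s k) ^ 2) with hIdef
  have hI0 : 0 ≤ I :=
    intervalIntegral.integral_nonneg hT.le fun s _ => Real.sqrt_nonneg _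
  -- Cauchy-Schwarz : I ≤ √(T U)
  have hICS : I ≤ Real.sqrt (T * U) := by
    have key : ∀ c : ℝ, 0 < c → I ≤ (c * U + T / c) / 2 := by
      intro c hc
      have hpt : ∀ x ∈ Set.Icc (0:ℝ) T,
          Real.sqrt (∑ k, (u x k) ^ 2) ≤ (c * (∑ k, (u x k) ^ 2) + 1 / c) / 2 := by
        intro x _
        have h0 : (0:ℝ) ≤ ∑ k, (u x k)^2 := Finset.sum_nonneg fun i _ => sq_nonneg _
        have hinv : c * (1 / c) = 1 := by field_simp
        nlinarith [Real.sq_sqrt h0, Real.sqrt_nonneg (∑ k, (u x k)^2),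
          sq_nonneg (c * Real.sqrt (∑ k, (u x k)^2) - 1), mul_pos hc hc, hc, hinv]
      have hmono := intervalIntegral.integral_mono_on hT.le h_nu
        (((hu.const_mul c).add intervalIntegrable_const).div_const 2) hpt
      calc I ≤ ∫ x in (0:ℝ)..T, (c * (∑ k, (u x k) ^ 2) + 1 / c) / 2 := hmono
        _ = (c * U + T / c) / 2 := by
            rw [intervalIntegral.integral_div, intervalIntegral.integral_add (hu.const_mul c)
              intervalIntegrable_const, intervalIntegral.integral_const_mul,
              intervalIntegral.integral_const]
            simp; ring
    rcases hU0.lt_or_eq with hU0' | hU0'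
    · have hk := key (Real.sqrt T / Real.sqrt U) (by positivity)
      have hsT := Real.sq_sqrt hT.le
      have hsU := Real.sq_sqrt hU0'.le
      have h1 : (Real.sqrt T / Real.sqrt U * U + T / (Real.sqrt T / Real.sqrt U)) / 2
          = Real.sqrt T * Real.sqrt U := by
        have h2 : Real.sqrt T ≠ 0 := by positivity
        have h3 : Real.sqrt U ≠ 0 := by positivity
        field_simp
        nlinarith [hsT, hsU]
      rw [h1] at hk
      rwa [Real.sqrt_mul hT.le]
    · have hI' : I ≤ 0 := by
        by_contra hcon
        push_neg at hcon
        have hk := key (T / I) (by positivity)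
        rw [← hU0'] at hk
        have hTI : T / (T / I) = I := by field_simp
        rw [hTI] at hk
        nlinarith
      have : Real.sqrt (T * U) ≥ 0 := Real.sqrt_nonneg _
      linarith
  -- the key a priori estimate, for each ε > 0
  have hkeyε : ∀ ε : ℝ, 0 < ε → ∀ t ∈ Set.Icc (0:ℝ) T,
      |Real.sqrt (E t + ε) - Real.sqrt (E 0 + ε)| ≤ Real.sqrt ℓ * β * I := by
    intro ε hε t ht
    have hEεpos : ∀ s, 0 < E s + ε := fun s => by linarith [hEnn s]
    obtain ⟨ht0, htT⟩ := ht
    have hIccsub : Set.Icc (0:ℝ) t ⊆ Set.Icc 0 T := Set.Icc_subset_Icc le_rfl htT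
    have hIocsub : Set.Ioc (0:ℝ) t ⊆ Set.Icc 0 T := fun s hs => ⟨hs.1.le, hs.2.trans htT⟩
    set f : ℝ → ℝ := fun s => Real.sqrt (E s + ε) with hfdef
    set f' : ℝ → ℝ := fun s => g' s / (2 * Real.sqrt (E s + ε)) with hf'def
    have hf : ∀ s ∈ Set.Icc (0:ℝ) T, HasDerivAt f (f' s) s := by
      intro s hs
      exact ((hderiv s hs).add_const ε).sqrt (hEεpos s).ne'
    have hEcont : ContinuousOn E (Set.Icc 0 T) :=
      fun s hs => (hderiv s hs).continuousAt.continuousWithinAt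
    have habs : ∀ᵐ s ∂volume.restrict (Set.Ioc (0:ℝ) t),
        |f' s| ≤ Real.sqrt ℓ * β * Real.sqrt (∑ k, (u s k) ^ 2) := by
      filter_upwards [ae_restrict_of_ae henergy, ae_restrict_mem measurableSet_Ioc] with s hs hst
      have hsIcc : s ∈ Set.Icc (0:ℝ) T := hIocsub hst
      have hg : g' s = 2 * (α s ⬝ᵥ (B₁ (z s)).mulVec (u s)) := by
        have := hs hsIcc; linarith
      have hCS : |α s ⬝ᵥ (B₁ (z s)).mulVec (u s)|
          ≤ Real.sqrt (E s) * Real.sqrt (∑ i, ((B₁ (z s)).mulVec (u s) i) ^ 2) := by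
        rw [← Real.sqrt_sq_eq_abs, ← Real.sqrt_mul (hEnn s)]
        apply Real.sqrt_le_sqrt
        exact Finset.sum_mul_sq_le_sq_mul_sq _ _ _
      have hBB := hB₁ (z s) (u s)
      have h1 : |g' s|
          ≤ 2 * Real.sqrt (E s) * (Real.sqrt ℓ * β * Real.sqrt (∑ k, (u s k) ^ 2)) := by
        rw [hg, abs_mul, abs_two]
        nlinarith [hCS, abs_nonneg (α s ⬝ᵥ (B₁ (z s)).mulVec (u s)),
          Real.sqrt_nonneg (∑ i, ((B₁ (z s)).mulVec (u s) i) ^ 2), Real.sqrt_nonneg (E s)]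
      have hsE : Real.sqrt (E s) ≤ Real.sqrt (E s + ε) := Real.sqrt_le_sqrt (by linarith)
      have hpos : 0 < 2 * Real.sqrt (E s + ε) := mul_pos two_pos (Real.sqrt_pos.2 (hEεpos s))
      show |g' s / (2 * Real.sqrt (E s + ε))| ≤ _
      rw [abs_div, abs_of_pos hpos, div_le_iff₀ hpos]
      have hnn : (0:ℝ) ≤ Real.sqrt ℓ * β * Real.sqrt (∑ k, (u s k) ^ 2) := by positivity
      calc |g' s| ≤ 2 * Real.sqrt (E s) * (Real.sqrt ℓ * β * Real.sqrt (∑ k, (u s k) ^ 2)) := h1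
        _ ≤ 2 * Real.sqrt (E s + ε) * (Real.sqrt ℓ * β * Real.sqrt (∑ k, (u s k) ^ 2)) := by
            nlinarith [Real.sqrt_nonneg (E s)]
        _ = Real.sqrt ℓ * β * Real.sqrt (∑ k, (u s k) ^ 2) * (2 * Real.sqrt (E s + ε)) := by ring
    have hg'int : IntervalIntegrable f' volume 0 t := by
      apply IntervalIntegrable.mono_fun'
        (g := fun s => Real.sqrt ℓ * β * Real.sqrt (∑ k, (u s k) ^ 2))
      · exact (h_nu.const_mul _).mono_set' (by
          rw [Set.uIoc_of_le ht0, Set.uIoc_of_le hT.le]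
          exact Set.Ioc_subset_Ioc le_rfl htT)
      · rw [Set.uIoc_of_le ht0]
        have hEm : AEMeasurable E (volume.restrict (Set.Ioc 0 t)) :=
          (hEcont.mono hIocsub).aemeasurable measurableSet_Ioc
        have hd : AEMeasurable (fun s => deriv E s / (2 * Real.sqrt (E s + ε)))
            (volume.restrict (Set.Ioc 0 t)) :=
          (measurable_deriv E).aemeasurable.div
            (((Real.continuous_sqrt.measurable.comp_aemeasurable (hEm.add_const ε))).const_mul 2)
        apply hd.aestronglyMeasurable.congr
        filter_upwards [ae_restrict_mem measurableSet_Ioc] with s hs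
        have hde : deriv E s = g' s := (hderiv s (hIocsub hs)).deriv
        show deriv E s / (2 * Real.sqrt (E s + ε)) = g' s / (2 * Real.sqrt (E s + ε))
        rw [hde]
      · rw [Set.uIoc_of_le ht0]
        filter_upwards [habs] with s hs
        rw [Real.norm_eq_abs]; exact hs
    have hftc : ∫ s in (0:ℝ)..t, f' s = f t - f 0 := by
      apply intervalIntegral.integral_eq_sub_of_hasDerivAt
      · intro s hs
        rw [Set.uIcc_of_le ht0] at hs
        exact hf s (hIccsub hs)
      · exact hg'int
    have hbound : |∫ s in (0:ℝ)..t, f' s|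
        ≤ ∫ s in (0:ℝ)..t, Real.sqrt ℓ * β * Real.sqrt (∑ k, (u s k) ^ 2) := by
      have hnb := intervalIntegral.norm_integral_le_abs_of_norm_le (μ := volume) (a := 0) (b := t)
        (f := f') (g := fun s => Real.sqrt ℓ * β * Real.sqrt (∑ k, (u s k) ^ 2))
        (by rw [Set.uIoc_of_le ht0]
            filter_upwards [habs] with s hs
            rw [Real.norm_eq_abs]; exact hs)
        ((h_nu.const_mul _).mono_set' (by
          rw [Set.uIoc_of_le ht0, Set.uIoc_of_le hT.le]
          exact Set.Ioc_subset_Ioc le_rfl htT))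
      rw [Real.norm_eq_abs] at hnb
      apply hnb.trans
      apply le_of_eq
      apply abs_of_nonneg
      apply intervalIntegral.integral_nonneg ht0
      intro s _; positivity
    have hmono : (∫ s in (0:ℝ)..t, Real.sqrt ℓ * β * Real.sqrt (∑ k, (u s k) ^ 2))
        ≤ ∫ s in (0:ℝ)..T, Real.sqrt ℓ * β * Real.sqrt (∑ k, (u s k) ^ 2) := by
      apply intervalIntegral.integral_mono_interval le_rfl ht0 htT
      · filter_upwards with s; positivity
      · exact h_nu.const_mul _
    have hfin : (∫ s in (0:ℝ)..T, Real.sqrt ℓ * β * Real.sqrt (∑ k, (u s k) ^ 2))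
        = Real.sqrt ℓ * β * I := by
      rw [intervalIntegral.integral_const_mul]
    calc |f t - f 0| = |∫ s in (0:ℝ)..t, f' s| := by rw [hftc]
      _ ≤ _ := hbound
      _ ≤ _ := hmono
      _ = _ := hfin
  -- pass to the limit ε → 0
  have hkey : ∀ t ∈ Set.Icc (0:ℝ) T,
      |Real.sqrt (E t) - Real.sqrt (E 0)| ≤ Real.sqrt ℓ * β * I := by
    intro t ht
    apply le_of_forall_pos_le_add
    intro δ hδ
    have hε : (0:ℝ) < (δ/2)^2 := by positivity
    have h1 := hkeyε ((δ/2)^2) hε t ht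
    have ha1 := aux_sqrt_add_le (E t) ((δ/2)^2) (hEnn t) hε.le
    have hb1 := aux_sqrt_add_le (E 0) ((δ/2)^2) (hEnn 0) hε.le
    have hs : Real.sqrt ((δ/2)^2) = δ/2 := Real.sqrt_sq (by linarith)
    rw [hs] at ha1 hb1
    have hm1 : Real.sqrt (E t) ≤ Real.sqrt (E t + (δ/2)^2) := Real.sqrt_le_sqrt (by linarith)
    have hm2 : Real.sqrt (E 0) ≤ Real.sqrt (E 0 + (δ/2)^2) := Real.sqrt_le_sqrt (by linarith)
    rw [abs_le] at h1 ⊢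
    constructor <;> [nlinarith [h1.1]; nlinarith [h1.2]]
  -- final algebra
  set a : ℝ := Real.sqrt (E 0) with hadef
  have ha : 0 < a := Real.sqrt_pos.2 hE0
  have ha2 : a ^ 2 = E 0 := Real.sq_sqrt (hEnn 0)
  set b : ℝ := Real.sqrt ℓ * β * I with hbdef
  have hb0 : 0 ≤ b := by positivity
  have hb2 : b ^ 2 ≤ T * ℓ * β ^ 2 * U := by
    have hI2 : I ^ 2 ≤ T * U := by
      have := pow_le_pow_left₀ hI0 hICS 2
      rwa [Real.sq_sqrt (mul_nonneg hT.le hU0)] at this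
    calc b ^ 2 = (Real.sqrt ℓ) ^ 2 * β ^ 2 * I ^ 2 := by rw [hbdef]; ring
      _ = ℓ * β ^ 2 * I ^ 2 := by rw [Real.sq_sqrt (Nat.cast_nonneg ℓ)]
      _ ≤ ℓ * β ^ 2 * (T * U) := by
          apply mul_le_mul_of_nonneg_left hI2 (by positivity)
      _ = T * ℓ * β ^ 2 * U := by ring
  have hepos : (0:ℝ) < Real.exp 1 := Real.exp_pos 1
  have hegt : (2.7182818283:ℝ) < Real.exp 1 := Real.exp_one_gt_d9
  have hrw : T * (ℓ:ℝ) * β ^ 2 * (E 0 / (β ^ 2 * Real.exp 1 * T * ℓ)) = E 0 / Real.exp 1 := by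
    field_simp
  have hWsmall : T * (ℓ:ℝ) * β ^ 2 * U < a ^ 2 / Real.exp 1 := by
    have := mul_lt_mul_of_pos_left hsmall (show (0:ℝ) < T * ℓ * β ^ 2 by positivity)
    rw [hrw] at this
    rwa [ha2]
  have hb2e : b ^ 2 * Real.exp 1 < a ^ 2 := by
    have h1 : b ^ 2 < a ^ 2 / Real.exp 1 := lt_of_le_of_lt hb2 hWsmall
    rw [lt_div_iff₀ hepos] at h1
    exact h1
  have hba : b ≤ a := by nlinarith
  intro t ht
  have hkt := hkey t ht
  rw [abs_le] at hkt
  have ht1 : a - b ≤ Real.sqrt (E t) := by linarith [hkt.2]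
  have ht2 : Real.sqrt (E t) ≤ a + b := by linarith [hkt.1]
  have hse0 : 0 ≤ Real.sqrt (E t) := Real.sqrt_nonneg _
  have hEt2 : Real.sqrt (E t) ^ 2 = E t := Real.sq_sqrt (hEnn t)
  constructor
  · -- lower bound
    show T * (ℓ:ℝ) * β ^ 2 * (E 0 / (β ^ 2 * Real.exp 1 * T * ℓ) - U) < E t
    have hgoal : T * (ℓ:ℝ) * β ^ 2 * (E 0 / (β ^ 2 * Real.exp 1 * T * ℓ) - U)
        = a ^ 2 / Real.exp 1 - T * (ℓ:ℝ) * β ^ 2 * U := by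
      rw [mul_sub, hrw, ha2]
    rw [hgoal]
    have hEtlb : (a - b) ^ 2 ≤ E t := by
      rw [← hEt2]
      exact pow_le_pow_left₀ (by linarith) ht1 2
    have h2e : a ^ 2 / Real.exp 1 < a ^ 2 / 2 :=
      div_lt_div_of_pos_left (by positivity) two_pos (by linarith)
    nlinarith [sq_nonneg (a - 2*b), hb2, hEtlb, h2e]
  · -- upper bound
    show E t < (Real.exp 1 + 1) * E 0
    rw [← ha2, ← hEt2]
    have hub : Real.sqrt (E t) ^ 2 ≤ (a + b) ^ 2 := pow_le_pow_left₀ hse0 ht2 2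
    nlinarith [mul_pos ha ha, sq_nonneg (a - 2*b), hb2e, hub]
end
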